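/- Every determined atomic L∘-solution is L△-representable: if τ is a BD-satisfiable conjunction of atomic L∘-literals such that for every variable p with ∘p or •p occurring in τ, also p or ¬p occurs in τ, then there exists a conjunction τ' of L△-literals with τ weakly equivalent to τ' (τ ⊨_BD τ' and τ' ⊨_BD τ). -/

import Mathlib

inductive FV | T | B | N | F
deriving DecidableEq

open FV

def fneg : FV → FV
  | T => F | F => T | B => B | N => N

def fand : FV → FV → FV
  | T, x => x
  | x, T => x
  | F, _ => F
  | _, F => F
  | B, B => B
  | N, N => N
  | B, N => F
  | N, B => F

def forr : FV → FV → FV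
  | F, x => x
  | x, F => x
  | T, _ => T
  | _, T => T
  | B, B => B
  | N, N => N
  | B, N => T
  | N, B => T

def fcirc : FV → FV
  | T => T | F => T | B => F | N => F

def ftri : FV → FV
  | T => T | B => T | N => F | F => F

inductive Fm
  | var : ℕ → Fm
  | neg : Fm → Fm
  | conj : Fm → Fm → Fm
  | disj : Fm → Fm → Fm
  | circ : Fm → Fm
  | tri : Fm → Fm

def eval (v : ℕ → FV) : Fm → FV
  | .var p => v p
  | .neg φ => fneg (eval v φ)
  | .conj φ χ => fand (eval v φ) (eval v χ)
  | .disj φ χ => forr (eval v φ) (eval v χ)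
  | .circ φ => fcirc (eval v φ)
  | .tri φ => ftri (eval v φ)

/-- designated values -/
def desig (x : FV) : Prop := x = T ∨ x = B

/-- formulas over {¬,∧,∨} -/
def isBD : Fm → Prop
  | .var _ => True
  | .neg φ => isBD φ
  | .conj φ χ => isBD φ ∧ isBD χ
  | .disj φ χ => isBD φ ∧ isBD χ
  | .circ _ => False
  | .tri _ => False

/-- formulas over {¬,∧,∨,∘} -/
def isCircFm : Fm → Prop
  | .var _ => True
  | .neg φ => isCircFm φ
  | .conj φ χ => isCircFm φ ∧ isCircFm χ
  | .disj φ χ => isCircFm φ ∧ isCircFm χ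
  | .circ φ => isCircFm φ
  | .tri _ => False

/-- formulas over {¬,∧,∨,△} -/
def isTriFm : Fm → Prop
  | .var _ => True
  | .neg φ => isTriFm φ
  | .conj φ χ => isTriFm φ ∧ isTriFm χ
  | .disj φ χ => isTriFm φ ∧ isTriFm χ
  | .circ _ => False
  | .tri φ => isTriFm φ

/-- BD entailment between single formulas -/
def ent (φ χ : Fm) : Prop := ∀ v, desig (eval v φ) → desig (eval v χ)

/-- classical (two-valued) evaluation of {¬,∧,∨}-formulas -/
def evalC (b : ℕ → Bool) : Fm → Bool
  | .var p => b p
  | .neg φ => !(evalC b φ)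
  | .conj φ χ => evalC b φ && evalC b χ
  | .disj φ χ => evalC b φ || evalC b χ
  | .circ φ => evalC b φ
  | .tri φ => evalC b φ


/-- atomic L∘-literals: p, ¬p, ∘p, •p -/
inductive CLit
  | pos : ℕ → CLit
  | negl : ℕ → CLit
  | circ : ℕ → CLit
  | bullet : ℕ → CLit
deriving DecidableEq

def clitEval (v : ℕ → FV) : CLit → FV
  | .pos p => v p
  | .negl p => fneg (v p)
  | .circ p => fcirc (v p)
  | .bullet p => fneg (fcirc (v p))

/-- L△-literals: p, ¬p, △p, ¬△p, △¬p, ¬△¬p -/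
inductive TLit
  | pos : ℕ → TLit
  | negl : ℕ → TLit
  | tp : ℕ → TLit
  | ntp : ℕ → TLit
  | tn : ℕ → TLit
  | ntn : ℕ → TLit
deriving DecidableEq

def tlitEval (v : ℕ → FV) : TLit → FV
  | .pos p => v p
  | .negl p => fneg (v p)
  | .tp p => ftri (v p)
  | .ntp p => fneg (ftri (v p))
  | .tn p => ftri (fneg (v p))
  | .ntn p => fneg (ftri (fneg (v p)))

def trL (τ : List CLit) : CLit → List TLit
  | .pos p => [.pos p]
  | .negl p => [.negl p]
  | .circ p => if CLit.pos p ∈ τ then [.ntn p] else [.ntp p]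
  | .bullet p => if CLit.pos p ∈ τ then [.tn p] else [.tp p]

theorem determined_circ_term_tri_representable (τ : List CLit)
    (hsat : ∃ v : ℕ → FV, ∀ l ∈ τ, desig (clitEval v l))
    (hdet : ∀ p : ℕ, (CLit.circ p ∈ τ ∨ CLit.bullet p ∈ τ) →
      (CLit.pos p ∈ τ ∨ CLit.negl p ∈ τ)) :
    ∃ τ' : List TLit, ∀ v : ℕ → FV,
      (∀ l ∈ τ, desig (clitEval v l)) ↔ (∀ l ∈ τ', desig (tlitEval v l)) := by
  refine ⟨τ.flatMap (trL τ), fun v => ⟨?_, ?_⟩⟩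
  · intro h l' hl'
    obtain ⟨l, hl, hmem⟩ := List.mem_flatMap.1 hl'
    match l with
    | .pos p =>
      simp [trL] at hmem; subst hmem
      simpa [tlitEval, clitEval] using h _ hl
    | .negl p =>
      simp [trL] at hmem; subst hmem
      simpa [tlitEval, clitEval] using h _ hl
    | .circ p =>
      have hc := h _ hl
      by_cases hp : CLit.pos p ∈ τ
      · have hv := h _ hp
        simp [trL, hp] at hmem; subst hmem
        revert hv hc
        rcases hx : v p <;> simp [hx, clitEval, tlitEval, desig, fcirc, fneg, ftri]
      · have hn : CLit.negl p ∈ τ := (hdet p (Or.inl hl)).resolve_left hp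
        have hv := h _ hn
        simp [trL, hp] at hmem; subst hmem
        revert hv hc
        rcases hx : v p <;> simp [hx, clitEval, tlitEval, desig, fcirc, fneg, ftri]
    | .bullet p =>
      have hc := h _ hl
      by_cases hp : CLit.pos p ∈ τ
      · have hv := h _ hp
        simp [trL, hp] at hmem; subst hmem
        revert hv hc
        rcases hx : v p <;> simp [hx, clitEval, tlitEval, desig, fcirc, fneg, ftri]
      · have hn : CLit.negl p ∈ τ := (hdet p (Or.inr hl)).resolve_left hp
        have hv := h _ hn
        simp [trL, hp] at hmem; subst hmem
        revert hv hc
        rcases hx : v p <;> simp [hx, clitEval, tlitEval, desig, fcirc, fneg, ftri]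
  · intro h l hl
    have hmem : ∀ l₀ ∈ τ, ∀ l' ∈ trL τ l₀, desig (tlitEval v l') := by
      intro l₀ h₀ l' h'
      exact h _ (List.mem_flatMap.2 ⟨l₀, h₀, h'⟩)
    match l with
    | .pos p => simpa [clitEval, tlitEval] using hmem _ hl (.pos p) (by simp [trL])
    | .negl p => simpa [clitEval, tlitEval] using hmem _ hl (.negl p) (by simp [trL])
    | .circ p =>
      by_cases hp : CLit.pos p ∈ τ
      · have h1 := hmem _ hp (.pos p) (by simp [trL])
        have h2 := hmem _ hl (.ntn p) (by simp [trL, hp])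
        revert h1 h2
        rcases hx : v p <;> simp [hx, clitEval, tlitEval, desig, fcirc, fneg, ftri]
      · have hn : CLit.negl p ∈ τ := (hdet p (Or.inl hl)).resolve_left hp
        have h1 := hmem _ hn (.negl p) (by simp [trL])
        have h2 := hmem _ hl (.ntp p) (by simp [trL, hp])
        revert h1 h2
        rcases hx : v p <;> simp [hx, clitEval, tlitEval, desig, fcirc, fneg, ftri]
    | .bullet p =>
      by_cases hp : CLit.pos p ∈ τ
      · have h1 := hmem _ hp (.pos p) (by simp [trL])
        have h2 := hmem _ hl (.tn p) (by simp [trL, hp])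
        revert h1 h2
        rcases hx : v p <;> simp [hx, clitEval, tlitEval, desig, fcirc, fneg, ftri]
      · have hn : CLit.negl p ∈ τ := (hdet p (Or.inr hl)).resolve_left hp
        have h1 := hmem _ hn (.negl p) (by simp [trL])
        have h2 := hmem _ hl (.tp p) (by simp [trL, hp])
        revert h1 h2
        rcases hx : v p <;> simp [hx, clitEval, tlitEval, desig, fcirc, fneg, ftri]
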